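/- arXiv:2105.12353 — 6 statements merged into one kernel-verified Lean document; each statement's English description precedes it below -/
import Mathlib

section
/- Assume τ * |𝒜| ≤ K, that for every attribute b : 𝒜 at least τ items i ∉ H satisfy a i = b, and that at least K items of Fin n lie outside H. Then the PrivateRank output list R has length exactly K and contains at least τ items of every attribute, i.e. count b R ≥ τ for every b : 𝒜; consequently its least ratio is at least τ / K. (Theorem 4.1 of the paper.) -/
open Finset

/-- Number of entries of list `R` whose attribute is `b`. -/
def countAttr {n : ℕ} {𝒜 : Type*} [DecidableEq 𝒜] (a : Fin n → 𝒜) (b : 𝒜)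
    (R : List (Fin n)) : ℕ :=
  R.countP (fun i => a i = b)

/-- `CanAdd R i` holds iff adding item `i` to the current list `R` keeps the minimum
requirement `τ` satisfiable within `K` slots. -/
def CanAdd {n : ℕ} {𝒜 : Type*} [Fintype 𝒜] [DecidableEq 𝒜] (K τ : ℕ)
    (a : Fin n → 𝒜) (R : List (Fin n)) (i : Fin n) : Prop :=
  ∑ b : 𝒜, max 0 ((τ : ℤ) - countAttr a b (R ++ [i])) ≤ (K : ℤ) - (R.length + 1)

instance {n : ℕ} {𝒜 : Type*} [Fintype 𝒜] [DecidableEq 𝒜] (K τ : ℕ)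
    (a : Fin n → 𝒜) (R : List (Fin n)) (i : Fin n) :
    Decidable (CanAdd K τ a R i) := by
  unfold CanAdd; infer_instance

/-- The PrivateRank greedy fold: process items in the order `ord`, appending an item when it is
not in `H` and `CanAdd` holds. -/
def privateRank {n : ℕ} {𝒜 : Type*} [Fintype 𝒜] [DecidableEq 𝒜] (K τ : ℕ)
    (a : Fin n → 𝒜) (H : Finset (Fin n)) (ord : List (Fin n)) : List (Fin n) :=
  ord.foldl (fun R i => if i ∉ H ∧ CanAdd K τ a R i then R ++ [i] else R) []

section PrivateRankAux

variable {n : ℕ} {𝒜 : Type*} [Fintype 𝒜] [DecidableEq 𝒜]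

def deficit (τ : ℕ) (a : Fin n → 𝒜) (R : List (Fin n)) : ℤ :=
  ∑ b : 𝒜, max 0 ((τ : ℤ) - countAttr a b R)

lemma countAttr_append_single (a : Fin n → 𝒜) (b : 𝒜) (R : List (Fin n)) (i : Fin n) :
    countAttr a b (R ++ [i]) = countAttr a b R + if a i = b then 1 else 0 := by
  simp [countAttr, List.countP_append, List.countP_cons]

lemma deficit_nonneg (τ : ℕ) (a : Fin n → 𝒜) (R : List (Fin n)) :
    0 ≤ deficit τ a R :=
  Finset.sum_nonneg fun b _ => le_max_left _ _

lemma deficit_nil (τ : ℕ) (a : Fin n → 𝒜) :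
    deficit τ a ([] : List (Fin n)) = τ * Fintype.card 𝒜 := by
  simp [deficit, countAttr, mul_comm]

lemma deficit_append_single (τ : ℕ) (a : Fin n → 𝒜) (R : List (Fin n)) (i : Fin n) :
    deficit τ a (R ++ [i]) =
      deficit τ a R - (if countAttr a (a i) R < τ then 1 else 0) := by
  unfold deficit
  have : ∀ b : 𝒜, max 0 ((τ : ℤ) - countAttr a b (R ++ [i])) =
      max 0 ((τ : ℤ) - countAttr a b R) -
        (if b = a i then (if countAttr a (a i) R < τ then (1:ℤ) else 0) else 0) := by
    intro b
    rw [countAttr_append_single]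
    by_cases hb : b = a i
    · subst hb; simp only [if_pos rfl]
      split_ifs with h <;> push_cast <;> omega
    · have : ¬ (a i = b) := fun h => hb h.symm
      simp [this, hb]
  rw [Finset.sum_congr rfl (fun b _ => this b), Finset.sum_sub_distrib,
    Finset.sum_ite_eq' Finset.univ (a i)]
  simp

def CanAdd' (K τ : ℕ) (a : Fin n → 𝒜) (R : List (Fin n)) (i : Fin n) : Prop :=
  deficit τ a (R ++ [i]) ≤ (K : ℤ) - (R.length + 1)

instance (K τ : ℕ) (a : Fin n → 𝒜) (R : List (Fin n)) (i : Fin n) :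
    Decidable (CanAdd' K τ a R i) := by unfold CanAdd' deficit; infer_instance

def prStep (K τ : ℕ) (a : Fin n → 𝒜) (H : Finset (Fin n)) (R : List (Fin n)) (i : Fin n) :
    List (Fin n) :=
  if i ∉ H ∧ CanAdd' K τ a R i then R ++ [i] else R

variable {K τ : ℕ} {a : Fin n → 𝒜} {H : Finset (Fin n)}

lemma countAttr_le_step (b : 𝒜) (R : List (Fin n)) (i : Fin n) :
    countAttr a b R ≤ countAttr a b (prStep K τ a H R i) := by
  unfold prStep; split
  · rw [countAttr_append_single]; omega
  · exact le_refl _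

lemma prefix_foldl (l : List (Fin n)) :
    ∀ R : List (Fin n), ∃ t, l.foldl (prStep K τ a H) R = R ++ t ∧
      t.Sublist l ∧ ∀ x ∈ t, x ∉ H := by
  induction l with
  | nil => intro R; exact ⟨[], by simp⟩
  | cons i rest ih =>
    intro R
    rw [List.foldl_cons]
    obtain ⟨t, ht, hsub, hH⟩ := ih (prStep K τ a H R i)
    by_cases h : i ∉ H ∧ CanAdd' K τ a R i
    · have hs : prStep K τ a H R i = R ++ [i] := if_pos h
      refine ⟨i :: t, by rw [hs] at ht ⊢; simpa [List.append_assoc] using ht, List.Sublist.cons₂ _ hsub, ?_⟩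
      intro x hx
      rcases List.mem_cons.1 hx with rfl | hx
      · exact h.1
      · exact hH x hx
    · have hs : prStep K τ a H R i = R := if_neg h
      exact ⟨t, by rw [hs] at ht ⊢; exact ht, hsub.cons _, hH⟩

lemma inv_step {R : List (Fin n)} (i : Fin n)
    (h : deficit τ a R ≤ (K : ℤ) - R.length) :
    deficit τ a (prStep K τ a H R i) ≤ (K : ℤ) - (prStep K τ a H R i).length := by
  unfold prStep; split
  · rename_i hc
    have := hc.2
    unfold CanAdd' at this
    simp only [List.length_append, List.length_singleton]
    push_cast
    linarith
  · exact h

lemma inv_foldl (l : List (Fin n)) :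
    ∀ R : List (Fin n), deficit τ a R ≤ (K : ℤ) - R.length →
      deficit τ a (l.foldl (prStep K τ a H) R) ≤
        (K : ℤ) - (l.foldl (prStep K τ a H) R).length := by
  induction l with
  | nil => intro R h; exact h
  | cons i rest ih => intro R h; exact ih _ (inv_step i h)

lemma slack_step (R : List (Fin n)) (i : Fin n) :
    (K : ℤ) - (prStep K τ a H R i).length - deficit τ a (prStep K τ a H R i) ≤
      (K : ℤ) - R.length - deficit τ a R := by
  unfold prStep; split
  · rw [deficit_append_single]
    simp only [List.length_append, List.length_singleton]
    push_cast
    split_ifs <;> omega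
  · exact le_refl _

lemma slack_foldl (l : List (Fin n)) :
    ∀ R : List (Fin n),
      (K : ℤ) - (l.foldl (prStep K τ a H) R).length -
          deficit τ a (l.foldl (prStep K τ a H) R) ≤
        (K : ℤ) - R.length - deficit τ a R := by
  induction l with
  | nil => intro R; exact le_refl _
  | cons i rest ih => intro R; exact (ih _).trans (slack_step R i)

lemma countAttr_le_foldl (b : 𝒜) (l : List (Fin n)) :
    ∀ R : List (Fin n),
      countAttr a b R ≤ countAttr a b (l.foldl (prStep K τ a H) R) := by
  induction l with
  | nil => intro R; exact le_refl _
  | cons i rest ih =>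
    intro R
    exact (countAttr_le_step b R i).trans (ih _)

lemma count_ge (b : 𝒜) (l : List (Fin n)) :
    ∀ R : List (Fin n), deficit τ a R ≤ (K : ℤ) - R.length →
      countAttr a b (l.foldl (prStep K τ a H) R) < τ →
      countAttr a b R + l.countP (fun i => decide (i ∉ H ∧ a i = b)) ≤
        countAttr a b (l.foldl (prStep K τ a H) R) := by
  induction l with
  | nil => intro R _ _; simp
  | cons i rest ih =>
    intro R hInv hlt
    rw [List.foldl_cons] at hlt ⊢
    rw [List.countP_cons]
    by_cases h : i ∉ H ∧ a i = b
    · have hmono : countAttr a b (prStep K τ a H R i) ≤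
          countAttr a b (rest.foldl (prStep K τ a H) (prStep K τ a H R i)) :=
        countAttr_le_foldl b rest _
      have hmonoR : countAttr a b R ≤ countAttr a b (prStep K τ a H R i) :=
        countAttr_le_step b R i
      have hRlt : countAttr a (a i) R < τ := by rw [h.2]; omega
      have hca : CanAdd' K τ a R i := by
        unfold CanAdd'
        rw [deficit_append_single, if_pos hRlt]
        push_cast
        omega
      have hs : prStep K τ a H R i = R ++ [i] := if_pos ⟨h.1, hca⟩
      have hInv' : deficit τ a (prStep K τ a H R i) ≤
          (K : ℤ) - (prStep K τ a H R i).length := inv_step i hInv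
      have := ih (prStep K τ a H R i) hInv' hlt
      have hcnt : countAttr a b (prStep K τ a H R i) = countAttr a b R + 1 := by
        rw [hs, countAttr_append_single, if_pos h.2]
      have hp : (decide (i ∉ H ∧ a i = b)) = true := by simpa using h
      rw [hp]
      simp only [if_true]
      omega
    · have hmonoR : countAttr a b R ≤ countAttr a b (prStep K τ a H R i) :=
        countAttr_le_step b R i
      have := ih (prStep K τ a H R i) (inv_step i hInv) hlt
      have hp : (decide (i ∉ H ∧ a i = b)) = false := by
        simpa using h
      rw [hp]
      simp only [Bool.false_eq_true, if_false]
      omega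

lemma slack_final (l : List (Fin n)) :
    ∀ R : List (Fin n), deficit τ a R ≤ (K : ℤ) - R.length →
      ∀ i : Fin n, i ∈ l → i ∉ H → i ∉ l.foldl (prStep K τ a H) R →
      (K : ℤ) - (l.foldl (prStep K τ a H) R).length ≤
        deficit τ a (l.foldl (prStep K τ a H) R) := by
  induction l with
  | nil => intro R _ i hi; simp at hi
  | cons j rest ih =>
    intro R hInv i hil hiH hiF
    rw [List.foldl_cons] at hiF ⊢
    by_cases hj : j = i
    · subst hj
      by_cases hc : j ∉ H ∧ CanAdd' K τ a R j
      · exfalso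
        have hs : prStep K τ a H R j = R ++ [j] := if_pos hc
        obtain ⟨t, ht, -, -⟩ := prefix_foldl (K := K) (τ := τ) (a := a) (H := H) rest (prStep K τ a H R j)
        rw [ht, hs] at hiF
        exact hiF (by simp)
      · have hs : prStep K τ a H R j = R := if_neg hc
        have hnc : ¬ CanAdd' K τ a R j := fun h => hc ⟨hiH, h⟩
        unfold CanAdd' at hnc
        push_neg at hnc
        have hda := deficit_append_single τ a R j
        have hslack : (K : ℤ) - R.length ≤ deficit τ a R := by
          split_ifs at hda <;> push_cast at hnc ⊢ <;> omega
        have := slack_foldl (K := K) (τ := τ) (a := a) (H := H) rest R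
        rw [hs]
        linarith
    · have hi' : i ∈ rest := by
        rcases List.mem_cons.1 hil with h | h
        · exact absurd h.symm hj
        · exact h
      exact ih (prStep K τ a H R j) (inv_step j hInv) i hi' hiH hiF

lemma countP_map_sum (p : Fin n → Prop) [DecidablePred p] (l : List (Fin n)) :
    l.countP (fun i => decide (p i)) = (l.map fun i => if p i then 1 else 0).sum := by
  induction l with
  | nil => simp
  | cons i rest ih =>
    rw [List.countP_cons, List.map_cons, List.sum_cons, ih]
    by_cases h : p i <;> simp [h] <;> omega

lemma countP_eq_card (ord : List (Fin n)) (hord : ∀ i : Fin n, ord.count i = 1)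
    (p : Fin n → Prop) [DecidablePred p] :
    ord.countP (fun i => decide (p i)) = (univ.filter p).card := by
  have hperm : ord.Perm (List.finRange n) := by
    rw [List.perm_iff_count]
    intro x
    rw [hord x, List.count_eq_one_of_mem (List.nodup_finRange n) (List.mem_finRange x)]
  rw [hperm.countP_eq, countP_map_sum, Finset.card_filter, Fin.sum_univ_def]

end PrivateRankAux

/-- Theorem 4.1: the PrivateRank output has length `K`, contains at least `τ` items of every
sensitive attribute, and hence its least ratio is at least `τ / K`. -/
theorem privateRank_fairness
    (n K τ : ℕ) (𝒜 : Type*) [Fintype 𝒜] [DecidableEq 𝒜] [Nonempty 𝒜]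
    (a : Fin n → 𝒜) (H : Finset (Fin n)) (ord : List (Fin n))
    (hord : ∀ i : Fin n, ord.count i = 1)
    (hτK : τ * Fintype.card 𝒜 ≤ K)
    (hattr : ∀ b : 𝒜, τ ≤ (univ.filter (fun i : Fin n => i ∉ H ∧ a i = b)).card)
    (hK : K ≤ (univ.filter (fun i : Fin n => i ∉ H)).card) :
    (privateRank K τ a H ord).length = K ∧
    (∀ b : 𝒜, τ ≤ countAttr a b (privateRank K τ a H ord)) ∧
    (τ : ℝ) / K ≤
      (univ.inf' univ_nonempty
        (fun b : 𝒜 => (countAttr a b (privateRank K τ a H ord) : ℝ))) / K := by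
  have hstep : (fun (R : List (Fin n)) (i : Fin n) =>
      if i ∉ H ∧ CanAdd K τ a R i then R ++ [i] else R) = prStep K τ a H := by
    funext R i
    unfold prStep
    by_cases h : i ∉ H ∧ CanAdd K τ a R i
    · rw [if_pos h, if_pos ⟨h.1, (h.2 : CanAdd' K τ a R i)⟩]
    · rw [if_neg h, if_neg (fun h' => h ⟨h'.1, (h'.2 : CanAdd K τ a R i)⟩)]
  have hLdef : privateRank K τ a H ord = ord.foldl (prStep K τ a H) [] := by
    rw [privateRank, hstep]
  set L := ord.foldl (prStep K τ a H) ([] : List (Fin n)) with hLset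
  rw [hLdef]
  have hInv0 : deficit τ a ([] : List (Fin n)) ≤ (K : ℤ) - ([] : List (Fin n)).length := by
    rw [deficit_nil]
    push_cast
    simpa using (by exact_mod_cast hτK : ((τ * Fintype.card 𝒜 : ℕ) : ℤ) ≤ (K : ℤ))
  have hInvL : deficit τ a L ≤ (K : ℤ) - L.length := inv_foldl ord [] hInv0
  have hcount : ∀ b : 𝒜, τ ≤ countAttr a b L := by
    intro b
    by_contra hb
    push_neg at hb
    have h1 := count_ge b ord [] hInv0 hb
    rw [← hLset] at h1
    rw [countP_eq_card ord hord (fun i => i ∉ H ∧ a i = b)] at h1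
    have h2 := hattr b
    have h0 : countAttr a b ([] : List (Fin n)) = 0 := rfl
    omega
  have hD0 : deficit τ a L = 0 := by
    refine le_antisymm ?_ (deficit_nonneg τ a L)
    refine le_of_eq (Finset.sum_eq_zero fun b _ => ?_)
    have := hcount b
    have hle : (τ : ℤ) - countAttr a b L ≤ 0 := by
      push_cast
      omega
    exact max_eq_left hle
  have hlen : L.length = K := by
    have hle : L.length ≤ K := by
      have := deficit_nonneg τ a L
      omega
    refine le_antisymm hle ?_
    by_contra hlt
    push_neg at hlt
    obtain ⟨t, ht, hsub, hH⟩ := prefix_foldl (K := K) (τ := τ) (a := a) (H := H) ord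
      ([] : List (Fin n))
    have hLt : L = t := by simpa using ht
    have hnodup : ord.Nodup := List.nodup_iff_count_le_one.mpr fun x => (hord x).le
    have hLnodup : L.Nodup := hLt ▸ hsub.nodup hnodup
    have hsubset : L.toFinset ⊆ univ.filter (fun i : Fin n => i ∉ H) := by
      intro x hx
      rw [Finset.mem_filter]
      have hxL : x ∈ L := List.mem_toFinset.1 hx
      rw [hLt] at hxL
      exact ⟨Finset.mem_univ x, hH x hxL⟩
    have hcard : L.toFinset.card = L.length := List.toFinset_card_of_nodup hLnodup
    have hcardlt : L.toFinset.card < (univ.filter (fun i : Fin n => i ∉ H)).card := by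
      omega
    obtain ⟨i, hiF, hiL⟩ : ∃ i ∈ univ.filter (fun i : Fin n => i ∉ H), i ∉ L.toFinset := by
      by_contra hall
      push_neg at hall
      have hsub2 : univ.filter (fun i : Fin n => i ∉ H) ⊆ L.toFinset := fun x hx => hall x hx
      have := Finset.card_le_card hsub2
      omega
    have hiH : i ∉ H := (Finset.mem_filter.1 hiF).2
    have hiord : i ∈ ord := by
      by_contra hmem
      have := hord i
      rw [List.count_eq_zero_of_not_mem hmem] at this
      omega
    have hiL' : i ∉ L := fun hm => hiL (List.mem_toFinset.2 hm)
    have hsf := slack_final ord [] hInv0 i hiord hiH hiL'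
    rw [← hLset, hD0] at hsf
    omega
  refine ⟨hlen, hcount, ?_⟩
  have hinf : (τ : ℝ) ≤ univ.inf' univ_nonempty
      (fun b : 𝒜 => (countAttr a b L : ℝ)) := by
    refine Finset.le_inf' _ _ fun b _ => ?_
    exact_mod_cast hcount b
  rcases Nat.eq_zero_or_pos K with hK0 | hKpos
  · simp [hK0]
  · have hKR : (0 : ℝ) < K := by exact_mod_cast hKpos
    gcongr
end

section
/- Assume K ≥ 2, L ≥ 1 and 0 < c < 1/((K+1)² · (log(K+1))²). Then for every item i the truncated personalized PageRank vector Ŝ_i ranks the provider's recommendations first and in the same order: (a) Ŝ_i (P i k) > Ŝ_i (P i k') whenever k < k' (k, k' : Fin K); and (b) Ŝ_i (P i k) > Ŝ_i l for every k : Fin K and every item l ≠ i with l ∉ { P i k' : k' : Fin K }. Consequently the K largest entries of Ŝ_i among items different from i are attained exactly at P i 0, …, P i (K−1), in this order, so PrivateRank with minimum requirement τ = 0 outputs the same top-K recommendation list as the provider recommender system. (Theorem 4.2 of the paper.) -/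
open Finset Matrix

/-- The normalizing constant `D = ∑_{r=1}^{K} 1 / log (r+1)`. -/
noncomputable def Dconst (K : ℕ) : ℝ := ∑ r ∈ Finset.Icc 1 K, 1 / Real.log ((r : ℝ) + 1)

/-- The weighted adjacency matrix of the recommendation network: `A i j = 1 / log (k+2)` if
`P i k = j` for some (necessarily unique, by injectivity) rank `k : Fin K`, and `0` otherwise. -/
noncomputable def adj {n K : ℕ} (P : Fin n → Fin K → Fin n) :
    Matrix (Fin n) (Fin n) ℝ := fun i j =>
  ∑ k : Fin K, if P i k = j then 1 / Real.log (((k : ℕ) : ℝ) + 2) else 0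

/-- The row-normalized adjacency matrix `Ã = D⁻¹ • A`. -/
noncomputable def normAdj {n K : ℕ} (P : Fin n → Fin K → Fin n) :
    Matrix (Fin n) (Fin n) ℝ :=
  (Dconst K)⁻¹ • adj P

/-- The truncated personalized PageRank vector
`Ŝ_i = (1-c) • ((∑_{k=0}^{L} (c • Ãᵀ)^k) *ᵥ e_i)`. -/
noncomputable def pprTrunc {n K : ℕ} (P : Fin n → Fin K → Fin n) (c : ℝ) (L : ℕ)
    (i : Fin n) : Fin n → ℝ :=
  (1 - c) • ((∑ k ∈ Finset.range (L + 1), (c • (normAdj P)ᵀ) ^ k) *ᵥ Pi.single i 1)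

/-! ### Auxiliary lemmas -/

lemma PPR.log_pos_aux (k : ℕ) : 0 < Real.log ((k : ℝ) + 2) :=
  Real.log_pos (by have : (0:ℝ) ≤ (k:ℝ) := Nat.cast_nonneg k; linarith)

lemma PPR.one_lt_log {x : ℝ} (hx : 3 ≤ x) : 1 < Real.log x := by
  have h3 : Real.exp 1 < 3 := by
    have := Real.exp_one_lt_d9; linarith
  calc 1 = Real.log (Real.exp 1) := (Real.log_exp 1).symm
    _ < Real.log 3 := Real.log_lt_log (Real.exp_pos 1) h3
    _ ≤ Real.log x := Real.log_le_log (by norm_num) hx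

lemma PPR.Dconst_eq (K : ℕ) :
    Dconst K = ∑ k ∈ Finset.range K, 1 / Real.log ((k : ℝ) + 2) := by
  unfold Dconst
  rw [show Finset.Icc 1 K = Finset.Ico 1 (K + 1) by rw [Finset.Ico_add_one_right_eq_Icc],
    Finset.sum_Ico_eq_sum_range]
  simp only [Nat.add_sub_cancel]
  refine Finset.sum_congr rfl fun k _ => ?_
  have h : ((1 + k : ℕ) : ℝ) + 1 = (k : ℝ) + 2 := by push_cast; ring
  rw [h]

lemma PPR.Dconst_pos {K : ℕ} (hK : 1 ≤ K) : 0 < Dconst K := by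
  rw [PPR.Dconst_eq]
  refine Finset.sum_pos (fun k _ => div_pos one_pos (PPR.log_pos_aux k))
    (Finset.nonempty_range_iff.2 (by omega))

lemma PPR.Dconst_le {K : ℕ} (hK : 1 ≤ K) : Dconst K ≤ (K : ℝ) + 1/2 := by
  rw [PPR.Dconst_eq]
  have hmem : 0 ∈ Finset.range K := Finset.mem_range.2 (by omega)
  rw [← Finset.add_sum_erase _ _ hmem]
  have h0 : 1 / Real.log (((0:ℕ) : ℝ) + 2) ≤ 3/2 := by
    have hl2 := Real.log_two_gt_d9
    rw [Nat.cast_zero, zero_add, div_le_iff₀ (Real.log_pos one_lt_two)]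
    linarith
  have hrest : ∑ k ∈ (Finset.range K).erase 0, 1 / Real.log ((k:ℝ) + 2)
      ≤ ∑ _k ∈ (Finset.range K).erase 0, (1:ℝ) := by
    refine Finset.sum_le_sum fun k hk => ?_
    have hk0 : k ≠ 0 := Finset.ne_of_mem_erase hk
    have hk1 : (1:ℝ) ≤ (k:ℝ) := by exact_mod_cast Nat.one_le_iff_ne_zero.2 hk0
    have h1 : 1 < Real.log ((k:ℝ) + 2) := PPR.one_lt_log (by linarith)
    rw [div_le_one (by linarith)]; linarith
  have hcard : ∑ _k ∈ (Finset.range K).erase 0, (1:ℝ) = (K:ℝ) - 1 := by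
    rw [Finset.sum_const, Finset.card_erase_of_mem hmem, Finset.card_range,
      nsmul_eq_mul, mul_one, Nat.cast_sub hK, Nat.cast_one]
  linarith

lemma PPR.adj_nonneg {n K : ℕ} (P : Fin n → Fin K → Fin n) (i j : Fin n) :
    0 ≤ adj P i j := by
  refine Finset.sum_nonneg fun k _ => ?_
  split
  · exact le_of_lt (div_pos one_pos (PPR.log_pos_aux k))
  · exact le_rfl

lemma PPR.adj_rank {n K : ℕ} (P : Fin n → Fin K → Fin n)
    (hinj : ∀ i, Function.Injective (P i)) (i : Fin n) (k : Fin K) :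
    adj P i (P i k) = 1 / Real.log (((k : ℕ) : ℝ) + 2) := by
  unfold adj
  rw [Finset.sum_eq_single k]
  · simp
  · intro k' _ hk'
    exact if_neg fun h => hk' (hinj i h)
  · simp

lemma PPR.adj_notrank {n K : ℕ} (P : Fin n → Fin K → Fin n) (i l : Fin n)
    (hl : ∀ k : Fin K, P i k ≠ l) : adj P i l = 0 := by
  unfold adj
  exact Finset.sum_eq_zero fun k _ => if_neg (hl k)

lemma PPR.adj_rowSum {n K : ℕ} (P : Fin n → Fin K → Fin n) (i : Fin n) :
    ∑ j, adj P i j = Dconst K := by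
  unfold adj
  rw [Finset.sum_comm, PPR.Dconst_eq, ← Fin.sum_univ_eq_sum_range]
  refine Finset.sum_congr rfl fun k _ => ?_
  simp [Finset.sum_ite_eq]

lemma PPR.normAdj_nonneg {n K : ℕ} (hK : 1 ≤ K) (P : Fin n → Fin K → Fin n) (i j : Fin n) :
    0 ≤ normAdj P i j := by
  have h1 := PPR.Dconst_pos hK
  have h2 := PPR.adj_nonneg P i j
  unfold normAdj
  simp only [Matrix.smul_apply, smul_eq_mul]
  positivity

lemma PPR.normAdj_rowSum {n K : ℕ} (hK : 1 ≤ K) (P : Fin n → Fin K → Fin n) (i : Fin n) :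
    ∑ j, normAdj P i j = 1 := by
  unfold normAdj
  simp only [Matrix.smul_apply, smul_eq_mul, ← Finset.mul_sum]
  rw [PPR.adj_rowSum]
  exact inv_mul_cancel₀ (PPR.Dconst_pos hK).ne'

lemma PPR.pow_entry {n K : ℕ} (hK : 1 ≤ K) (P : Fin n → Fin K → Fin n) (m : ℕ) (i j : Fin n) :
    0 ≤ ((normAdj P) ^ m) i j ∧ ((normAdj P) ^ m) i j ≤ 1 := by
  induction m generalizing i j with
  | zero =>
    simp only [pow_zero, Matrix.one_apply]
    split <;> norm_num
  | succ m ih =>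
    rw [pow_succ', Matrix.mul_apply]
    constructor
    · exact Finset.sum_nonneg fun l _ =>
        mul_nonneg (PPR.normAdj_nonneg hK P i l) (ih l j).1
    · calc ∑ l, normAdj P i l * ((normAdj P) ^ m) l j
          ≤ ∑ l, normAdj P i l * 1 := by
            refine Finset.sum_le_sum fun l _ => ?_
            exact mul_le_mul_of_nonneg_left (ih l j).2 (PPR.normAdj_nonneg hK P i l)
        _ = 1 := by simpa using PPR.normAdj_rowSum hK P i

lemma PPR.pprTrunc_apply {n K : ℕ} (P : Fin n → Fin K → Fin n) (c : ℝ) (L : ℕ)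
    (i j : Fin n) :
    pprTrunc P c L i j
      = (1 - c) * ∑ m ∈ Finset.range (L + 1), c ^ m * ((normAdj P) ^ m) i j := by
  unfold pprTrunc
  rw [Matrix.mulVec_single]
  simp only [Pi.smul_apply, smul_eq_mul, mul_one]
  congr 1
  simp only [MulOpposite.op_one, one_smul, Matrix.col_apply]
  rw [Matrix.sum_apply]
  refine Finset.sum_congr rfl fun m _ => ?_
  rw [smul_pow, Matrix.smul_apply, ← Matrix.transpose_pow, Matrix.transpose_apply,
    smul_eq_mul]

lemma PPR.geom_bound {c : ℝ} (h0 : 0 ≤ c) (h1 : c < 1) (N : ℕ) :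
    ∑ m ∈ Finset.range N, c ^ m ≤ (1 - c)⁻¹ := by
  have h := geom_sum_mul c N
  have hcn : 0 ≤ c ^ N := pow_nonneg h0 N
  have h1c : 0 < 1 - c := by linarith
  rw [inv_eq_one_div, le_div_iff₀ h1c]
  nlinarith [h, hcn]

/-- The key comparison lemma. -/
lemma PPR.key {n K : ℕ} (hK : 2 ≤ K) (P : Fin n → Fin K → Fin n)
    (c : ℝ) (L : ℕ) (hL : 1 ≤ L)
    (hc0 : 0 < c)
    (hc1 : c < 1 / (((K : ℝ) + 1) ^ 2 * Real.log ((K : ℝ) + 1) ^ 2))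
    (i j₁ j₂ : Fin n) (h1 : j₁ ≠ i) (h2 : j₂ ≠ i)
    (hgap : normAdj P i j₂ + (Dconst K * (((K:ℝ) + 1) * Real.log ((K:ℝ) + 1) ^ 2))⁻¹
        ≤ normAdj P i j₁) :
    pprTrunc P c L i j₂ < pprTrunc P c L i j₁ := by
  have hKn : 1 ≤ K := by omega
  set lg := Real.log ((K:ℝ) + 1) with hlgdef
  have hK3 : (3:ℝ) ≤ (K:ℝ) + 1 := by
    have : (2:ℝ) ≤ (K:ℝ) := by exact_mod_cast hK
    linarith
  have hlg1 : 1 < lg := PPR.one_lt_log hK3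
  have hD0 : 0 < Dconst K := PPR.Dconst_pos hKn
  have hDle : Dconst K ≤ (K:ℝ) + 1/2 := PPR.Dconst_le hKn
  set E := Dconst K * (((K:ℝ) + 1) * lg ^ 2) with hEdef
  have hEpos : 0 < E := by
    have : (0:ℝ) < (K:ℝ) + 1 := by linarith
    positivity
  have hlg2 : (1:ℝ) ≤ lg ^ 2 := by nlinarith
  have hE1 : E + 1 ≤ ((K:ℝ) + 1) ^ 2 * lg ^ 2 := by
    have h3 : (3:ℝ) ≤ ((K:ℝ) + 1) * lg ^ 2 := by nlinarith
    have h4 : E ≤ ((K:ℝ) + 1/2) * (((K:ℝ) + 1) * lg ^ 2) := by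
      rw [hEdef]
      exact mul_le_mul_of_nonneg_right hDle (by nlinarith)
    nlinarith
  have hc1' : c < 1 := by
    refine lt_of_lt_of_le hc1 ?_
    rw [div_le_one (by nlinarith)]
    nlinarith
  have h1c : 0 < 1 - c := by linarith
  have hcE : c * (E + 1) < 1 := by
    have hlt : c * (E + 1) < (1 / (((K:ℝ) + 1) ^ 2 * lg ^ 2)) * (E + 1) :=
      mul_lt_mul_of_pos_right hc1 (by linarith)
    have hle : (1 / (((K:ℝ) + 1) ^ 2 * lg ^ 2)) * (E + 1) ≤ 1 := by
      rw [div_mul_eq_mul_div, one_mul, div_le_one (by nlinarith)]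
      exact hE1
    linarith
  have hstep : c * (1 - c)⁻¹ < E⁻¹ := by
    rw [inv_eq_one_div E, lt_div_iff₀ hEpos,
      show c * (1 - c)⁻¹ * E = (c * E) * (1 - c)⁻¹ by ring, ← div_eq_mul_inv,
      div_lt_one h1c]
    nlinarith
  have hcγ : c * (c * (1 - c)⁻¹) < c * E⁻¹ := mul_lt_mul_of_pos_left hstep hc0
  -- expand pprTrunc
  rw [PPR.pprTrunc_apply, PPR.pprTrunc_apply]
  apply mul_lt_mul_of_pos_left _ h1c
  -- split sums
  have hsplit : ∀ j : Fin n, ∑ m ∈ Finset.range (L + 1), c ^ m * ((normAdj P) ^ m) i j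
      = c ^ 0 * ((normAdj P) ^ 0) i j + c ^ 1 * ((normAdj P) ^ 1) i j
        + ∑ m ∈ Finset.Ico 2 (L + 1), c ^ m * ((normAdj P) ^ m) i j := by
    intro j
    rw [Finset.range_eq_Ico,
      ← Finset.sum_Ico_consecutive _ (by omega : 0 ≤ 2) (by omega : 2 ≤ L + 1),
      ← Finset.range_eq_Ico]
    norm_num [Finset.sum_range_succ]
  have hzero : ∀ j : Fin n, j ≠ i → ((normAdj P) ^ 0) i j = 0 := by
    intro j hj
    rw [pow_zero]
    exact Matrix.one_apply_ne (Ne.symm hj)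
  have hT1 : 0 ≤ ∑ m ∈ Finset.Ico 2 (L + 1), c ^ m * ((normAdj P) ^ m) i j₁ :=
    Finset.sum_nonneg fun m _ =>
      mul_nonneg (pow_nonneg hc0.le m) (PPR.pow_entry hKn P m i j₁).1
  have hT2 : ∑ m ∈ Finset.Ico 2 (L + 1), c ^ m * ((normAdj P) ^ m) i j₂
      ≤ c ^ 2 * (1 - c)⁻¹ := by
    calc ∑ m ∈ Finset.Ico 2 (L + 1), c ^ m * ((normAdj P) ^ m) i j₂
        ≤ ∑ m ∈ Finset.Ico 2 (L + 1), c ^ m := by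
          refine Finset.sum_le_sum fun m _ => ?_
          have := (PPR.pow_entry hKn P m i j₂).2
          nlinarith [pow_nonneg hc0.le m, (PPR.pow_entry hKn P m i j₂).1]
      _ = c ^ 2 * ∑ m ∈ Finset.range (L + 1 - 2), c ^ m := by
          rw [Finset.sum_Ico_eq_sum_range, Finset.mul_sum]
          exact Finset.sum_congr rfl fun m _ => by rw [← pow_add]
      _ ≤ c ^ 2 * (1 - c)⁻¹ := by
          exact mul_le_mul_of_nonneg_left (PPR.geom_bound hc0.le hc1' _) (by positivity)
  have hmul : c * normAdj P i j₂ + c * E⁻¹ ≤ c * normAdj P i j₁ := by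
    have := mul_le_mul_of_nonneg_left hgap hc0.le
    linarith [this]
  rw [hsplit j₁, hsplit j₂, hzero j₁ h1, hzero j₂ h2, pow_one, pow_one]
  have hc2 : c * (c * (1 - c)⁻¹) = c ^ 2 * (1 - c)⁻¹ := by ring
  linarith [hT1, hT2, hmul, hcγ]

lemma PPR.gap {K : ℕ} (hK : 2 ≤ K) {a b : ℕ} (ha : 2 ≤ a) (hab : a < b) (hb : b ≤ K + 1) :
    1 / Real.log (b:ℝ) + (((K:ℝ) + 1) * Real.log ((K:ℝ) + 1) ^ 2)⁻¹
      ≤ 1 / Real.log (a:ℝ) := by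
  set lg := Real.log ((K:ℝ) + 1) with hlgdef
  have haR : (2:ℝ) ≤ (a:ℝ) := by exact_mod_cast ha
  have habR : (a:ℝ) + 1 ≤ (b:ℝ) := by exact_mod_cast hab
  have hbR : (b:ℝ) ≤ (K:ℝ) + 1 := by exact_mod_cast hb
  have ha0 : (0:ℝ) < a := by linarith
  have hb0 : (0:ℝ) < b := by linarith
  have hla : 0 < Real.log (a:ℝ) := Real.log_pos (by linarith)
  have hlb : 0 < Real.log (b:ℝ) := Real.log_pos (by linarith)
  have hlaK : Real.log (a:ℝ) ≤ lg := Real.log_le_log ha0 (by linarith)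
  have hlbK : Real.log (b:ℝ) ≤ lg := Real.log_le_log hb0 hbR
  have hd := Real.log_le_sub_one_of_pos (show (0:ℝ) < (a:ℝ) / (b:ℝ) by positivity)
  rw [Real.log_div ha0.ne' hb0.ne'] at hd
  have h1b : (1:ℝ) / ((K:ℝ) + 1) ≤ 1 / (b:ℝ) :=
    one_div_le_one_div_of_le hb0 hbR
  have h2b : (1:ℝ) / (b:ℝ) ≤ 1 - (a:ℝ) / (b:ℝ) := by
    have heq : (1:ℝ) - (a:ℝ) / (b:ℝ) = ((b:ℝ) - (a:ℝ)) / (b:ℝ) := by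
      field_simp
    rw [heq, div_le_div_iff₀ hb0 hb0]
    nlinarith
  have hKgap : ((K:ℝ) + 1)⁻¹ ≤ Real.log (b:ℝ) - Real.log (a:ℝ) := by
    rw [← one_div]
    linarith
  have hlalb : Real.log (a:ℝ) * Real.log (b:ℝ) ≤ lg ^ 2 := by nlinarith
  have hlalb0 : 0 < Real.log (a:ℝ) * Real.log (b:ℝ) := mul_pos hla hlb
  have key : 1 / Real.log (a:ℝ) - 1 / Real.log (b:ℝ)
      = (Real.log (b:ℝ) - Real.log (a:ℝ)) / (Real.log (a:ℝ) * Real.log (b:ℝ)) := by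
    field_simp
  have hK0 : (0:ℝ) < (K:ℝ) + 1 := by
    have : (2:ℝ) ≤ (K:ℝ) := by exact_mod_cast hK
    linarith
  have hlg1 : 1 < lg := PPR.one_lt_log (by
    have : (2:ℝ) ≤ (K:ℝ) := by exact_mod_cast hK
    linarith)
  have h1 : ((K:ℝ) + 1)⁻¹ * (lg ^ 2)⁻¹
      ≤ (Real.log (b:ℝ) - Real.log (a:ℝ)) / (Real.log (a:ℝ) * Real.log (b:ℝ)) := by
    rw [← div_eq_mul_inv]
    exact div_le_div₀ (le_trans (inv_nonneg.2 hK0.le) hKgap) hKgap hlalb0 hlalb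
  rw [mul_inv]
  linarith [key, h1]

lemma PPR.gap0 {K : ℕ} (hK : 2 ≤ K) {a : ℕ} (ha : 2 ≤ a) (haK : a ≤ K + 1) :
    (((K:ℝ) + 1) * Real.log ((K:ℝ) + 1) ^ 2)⁻¹ ≤ 1 / Real.log (a:ℝ) := by
  set lg := Real.log ((K:ℝ) + 1) with hlgdef
  have haR : (2:ℝ) ≤ (a:ℝ) := by exact_mod_cast ha
  have ha0 : (0:ℝ) < a := by linarith
  have hla : 0 < Real.log (a:ℝ) := Real.log_pos (by linarith)
  have hK0 : (0:ℝ) < (K:ℝ) + 1 := by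
    have : (2:ℝ) ≤ (K:ℝ) := by exact_mod_cast hK
    linarith
  have hlg1 : 1 < lg := PPR.one_lt_log (by
    have : (2:ℝ) ≤ (K:ℝ) := by exact_mod_cast hK
    linarith)
  have hlaK : Real.log (a:ℝ) ≤ lg :=
    Real.log_le_log ha0 (by exact_mod_cast haK)
  have hle : Real.log (a:ℝ) ≤ ((K:ℝ) + 1) * lg ^ 2 := by nlinarith
  rw [← one_div]
  exact one_div_le_one_div_of_le hla hle

/-- Theorem 4.2: for a small enough damping factor, the truncated personalized PageRank vector
`Ŝ_i` ranks the provider's recommendations first and in the same order, so PrivateRank with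
minimum requirement `τ = 0` outputs the same top-`K` list as the provider recommender system. -/
theorem pprTrunc_preserves_provider_ranking
    (n K : ℕ) (hK : 2 ≤ K) (P : Fin n → Fin K → Fin n)
    (hinj : ∀ i, Function.Injective (P i))
    (hne : ∀ i k, P i k ≠ i)
    (c : ℝ) (L : ℕ) (hL : 1 ≤ L)
    (hc0 : 0 < c)
    (hc1 : c < 1 / (((K : ℝ) + 1) ^ 2 * Real.log ((K : ℝ) + 1) ^ 2)) :
    (∀ (i : Fin n) (k k' : Fin K), k < k' →
        pprTrunc P c L i (P i k') < pprTrunc P c L i (P i k)) ∧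
    (∀ (i : Fin n) (k : Fin K) (l : Fin n), l ≠ i → (∀ k' : Fin K, P i k' ≠ l) →
        pprTrunc P c L i l < pprTrunc P c L i (P i k)) := by
  have hKn : 1 ≤ K := by omega
  have hD0 : 0 < Dconst K := PPR.Dconst_pos hKn
  have hDinv : (0:ℝ) ≤ (Dconst K)⁻¹ := inv_nonneg.2 hD0.le
  have hrank : ∀ (i : Fin n) (k : Fin K),
      normAdj P i (P i k) = (Dconst K)⁻¹ * (1 / Real.log (((k:ℕ):ℝ) + 2)) := by
    intro i k
    unfold normAdj
    rw [Matrix.smul_apply, PPR.adj_rank P hinj i k, smul_eq_mul]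
  constructor
  · intro i k k' hkk'
    refine PPR.key hK P c L hL hc0 hc1 i (P i k) (P i k') (hne i k) (hne i k') ?_
    rw [hrank i k, hrank i k', mul_inv]
    have hgap := PPR.gap hK (a := (k:ℕ) + 2) (b := (k':ℕ) + 2) (by omega)
      (by omega) (by omega)
    have hca : (((k:ℕ) + 2 : ℕ) : ℝ) = ((k:ℕ):ℝ) + 2 := by push_cast; ring
    have hcb : (((k':ℕ) + 2 : ℕ) : ℝ) = ((k':ℕ):ℝ) + 2 := by push_cast; ring
    rw [hca, hcb] at hgap
    have := mul_le_mul_of_nonneg_left hgap hDinv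
    linarith [this]
  · intro i k l hl hlnot
    refine PPR.key hK P c L hL hc0 hc1 i (P i k) l (hne i k) hl ?_
    rw [hrank i k]
    have h0 : normAdj P i l = 0 := by
      unfold normAdj
      rw [Matrix.smul_apply, PPR.adj_notrank P i l hlnot, smul_eq_mul, mul_zero]
    rw [h0, mul_inv]
    have hgap := PPR.gap0 hK (a := (k:ℕ) + 2) (by omega) (by omega)
    have hca : (((k:ℕ) + 2 : ℕ) : ℝ) = ((k:ℕ):ℝ) + 2 := by push_cast; ring
    rw [hca] at hgap
    have := mul_le_mul_of_nonneg_left hgap hDinv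
    linarith [this]
end

section
/- Assume τ * |𝒜| ≤ K and that for every attribute b : 𝒜 at least τ items i ∉ H satisfy a i = b. For 0 ≤ j ≤ n let R_j denote the list built by the greedy fold after processing the first j entries of ord. Then for every attribute b : 𝒜 and every j, count b R_j + |{ i ∉ H : a i = b and i occurs in ord at a position ≥ j }| ≥ τ. (This is the induction invariant in the proof of Theorem 4.1.) -/
open Finset

section aux
variable {n : ℕ} {𝒜 : Type*} [Fintype 𝒜] [DecidableEq 𝒜]
variable (K τ : ℕ) (a : Fin n → 𝒜) (H : Finset (Fin n))

lemma countAttr_concat (b : 𝒜) (R : List (Fin n)) (i : Fin n) :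
    countAttr a b (R ++ [i]) = countAttr a b R + if a i = b then 1 else 0 := by
  simp [countAttr, List.countP_append, List.countP_cons]

lemma privateRank_concat (l : List (Fin n)) (i : Fin n) :
    privateRank K τ a H (l ++ [i]) =
      if i ∉ H ∧ CanAdd K τ a (privateRank K τ a H l) i
      then privateRank K τ a H l ++ [i] else privateRank K τ a H l := by
  unfold privateRank; exact List.foldl_append

lemma privateRank_inv (hτK : τ * Fintype.card 𝒜 ≤ K) (l : List (Fin n)) :
    ∑ b : 𝒜, max 0 ((τ : ℤ) - countAttr a b (privateRank K τ a H l)) ≤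
      (K : ℤ) - (privateRank K τ a H l).length := by
  induction l using List.reverseRecOn with
  | nil =>
      have hmax : max 0 ((τ:ℤ)) = τ := max_eq_right (by positivity)
      simp only [privateRank, List.foldl_nil, countAttr, List.countP_nil, List.length_nil,
        Nat.cast_zero, sub_zero, hmax, Finset.sum_const, Finset.card_univ, nsmul_eq_mul]
      calc (Fintype.card 𝒜 : ℤ) * τ = ((τ * Fintype.card 𝒜 : ℕ) : ℤ) := by push_cast; ring
        _ ≤ (K : ℤ) := by exact_mod_cast hτK
  | append_singleton l i ih =>
      rw [privateRank_concat]
      split_ifs with h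
      · have h2 := h.2
        unfold CanAdd at h2
        simpa using h2
      · exact ih

lemma canAdd_fail (R : List (Fin n)) (i : Fin n)
    (hInv : ∑ b : 𝒜, max 0 ((τ : ℤ) - countAttr a b R) ≤ (K : ℤ) - R.length)
    (h : ¬ CanAdd K τ a R i) : τ ≤ countAttr a (a i) R := by
  by_contra hc
  push_neg at hc
  apply h
  unfold CanAdd
  have key : ∀ b : 𝒜, max 0 ((τ : ℤ) - countAttr a b (R ++ [i])) =
      max 0 ((τ : ℤ) - countAttr a b R) - (if b = a i then 1 else 0) := by
    intro b
    rw [countAttr_concat]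
    by_cases hb : b = a i
    · subst hb
      simp only [if_pos rfl]
      push_cast
      omega
    · have hne : a i ≠ b := fun hh => hb hh.symm
      simp [hb, hne]
  calc ∑ b : 𝒜, max 0 ((τ : ℤ) - countAttr a b (R ++ [i]))
      = ∑ b : 𝒜, (max 0 ((τ : ℤ) - countAttr a b R) - (if b = a i then 1 else 0)) := by
        exact Finset.sum_congr rfl fun b _ => key b
    _ = (∑ b : 𝒜, max 0 ((τ : ℤ) - countAttr a b R)) - 1 := by
        rw [Finset.sum_sub_distrib]; simp
    _ ≤ (K : ℤ) - R.length - 1 := by linarith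
    _ = (K : ℤ) - (R.length + 1) := by ring

end aux

/-- The induction invariant in the proof of Theorem 4.1: after processing the first `j` entries
of `ord`, for every attribute `b`, the items of attribute `b` already placed in the list, plus
the items of attribute `b` outside `H` still to be processed (occurring in `ord` at a position
`≥ j`), number at least `τ`. -/
theorem privateRank_invariant
    (n K τ : ℕ) (𝒜 : Type*) [Fintype 𝒜] [DecidableEq 𝒜] [Nonempty 𝒜]
    (a : Fin n → 𝒜) (H : Finset (Fin n)) (ord : List (Fin n))
    (hord : ∀ i : Fin n, ord.count i = 1)
    (hτK : τ * Fintype.card 𝒜 ≤ K)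
    (hattr : ∀ b : 𝒜, τ ≤ (univ.filter (fun i : Fin n => i ∉ H ∧ a i = b)).card) :
    ∀ (b : 𝒜) (j : ℕ), j ≤ n →
      τ ≤ countAttr a b (privateRank K τ a H (ord.take j)) +
        (univ.filter (fun i : Fin n => i ∉ H ∧ a i = b ∧ i ∈ ord.drop j)).card := by
  intro b
  suffices hgen : ∀ j : ℕ, τ ≤ countAttr a b (privateRank K τ a H (ord.take j)) +
      (univ.filter (fun i : Fin n => i ∉ H ∧ a i = b ∧ i ∈ ord.drop j)).card from
    fun j _ => hgen j
  intro j
  induction j with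
  | zero =>
      have hsub : univ.filter (fun i : Fin n => i ∉ H ∧ a i = b) ⊆
          univ.filter (fun i : Fin n => i ∉ H ∧ a i = b ∧ i ∈ ord.drop 0) := by
        intro x hx
        simp only [Finset.mem_filter, Finset.mem_univ, true_and, List.drop_zero] at hx ⊢
        refine ⟨hx.1, hx.2, ?_⟩
        have : 0 < ord.count x := by rw [hord x]; norm_num
        exact List.count_pos_iff.mp this
      have h1 : τ ≤ (univ.filter (fun i : Fin n => i ∉ H ∧ a i = b ∧ i ∈ ord.drop 0)).card :=
        le_trans (hattr b) (Finset.card_le_card hsub)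
      simpa [privateRank, countAttr] using h1
  | succ j ih =>
      by_cases hj : j < ord.length
      · have htake : ord.take (j+1) = ord.take j ++ [ord[j]] := by
          rw [List.take_succ, List.getElem?_eq_getElem hj]
          rfl
        have hdrop : ord.drop j = ord[j] :: ord.drop (j+1) := List.drop_eq_getElem_cons hj
        have hnotmem : ord[j] ∉ ord.drop (j+1) := by
          intro hmem2
          have h1 : (ord.drop j).count ord[j] ≤ 1 :=
            le_trans (List.Sublist.count_le _ (List.drop_sublist j ord)) (le_of_eq (hord _))
          rw [hdrop, List.count_cons_self] at h1
          have h2 : 1 ≤ (ord.drop (j+1)).count ord[j] := List.one_le_count_iff.mpr hmem2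
          omega
        have hcard : (univ.filter (fun x : Fin n => x ∉ H ∧ a x = b ∧ x ∈ ord.drop j)).card =
            (univ.filter (fun x : Fin n => x ∉ H ∧ a x = b ∧ x ∈ ord.drop (j+1))).card +
            (if ord[j] ∉ H ∧ a ord[j] = b then 1 else 0) := by
          split_ifs with hib
          · have hset : univ.filter (fun x : Fin n => x ∉ H ∧ a x = b ∧ x ∈ ord.drop j) =
                insert ord[j]
                  (univ.filter (fun x : Fin n => x ∉ H ∧ a x = b ∧ x ∈ ord.drop (j+1))) := by
              ext x
              simp only [Finset.mem_filter, Finset.mem_univ, true_and, Finset.mem_insert, hdrop,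
                List.mem_cons]
              constructor
              · rintro ⟨h1, h2, (h3 | h3)⟩
                · exact Or.inl h3
                · exact Or.inr ⟨h1, h2, h3⟩
              · rintro (rfl | ⟨h1, h2, h3⟩)
                · exact ⟨hib.1, hib.2, Or.inl rfl⟩
                · exact ⟨h1, h2, Or.inr h3⟩
            rw [hset, Finset.card_insert_of_notMem (by
              simp only [Finset.mem_filter, Finset.mem_univ, true_and]
              exact fun h => hnotmem h.2.2)]
          · have hset : univ.filter (fun x : Fin n => x ∉ H ∧ a x = b ∧ x ∈ ord.drop j) =
                univ.filter (fun x : Fin n => x ∉ H ∧ a x = b ∧ x ∈ ord.drop (j+1)) := by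
              ext x
              simp only [Finset.mem_filter, Finset.mem_univ, true_and, hdrop, List.mem_cons]
              constructor
              · rintro ⟨h1, h2, (rfl | h3)⟩
                · exact absurd ⟨h1, h2⟩ hib
                · exact ⟨h1, h2, h3⟩
              · rintro ⟨h1, h2, h3⟩
                exact ⟨h1, h2, Or.inr h3⟩
            rw [hset]
            omega
        rw [hcard] at ih
        rw [htake, privateRank_concat]
        split_ifs with hadd
        · rw [countAttr_concat]
          by_cases hb : a ord[j] = b
          · rw [if_pos ⟨hadd.1, hb⟩] at ih
            rw [if_pos hb]
            omega
          · rw [if_neg (fun h : ord[j] ∉ H ∧ a ord[j] = b => hb h.2)] at ih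
            rw [if_neg hb]
            omega
        · by_cases hib : ord[j] ∉ H ∧ a ord[j] = b
          · have hnca : ¬ CanAdd K τ a (privateRank K τ a H (ord.take j)) ord[j] :=
              fun hca => hadd ⟨hib.1, hca⟩
            have hτle := canAdd_fail K τ a (privateRank K τ a H (ord.take j)) ord[j]
              (privateRank_inv K τ a H hτK (ord.take j)) hnca
            rw [hib.2] at hτle
            omega
          · rw [if_neg hib] at ih
            omega
      · push_neg at hj
        have htake : ord.take (j+1) = ord.take j := by
          rw [List.take_of_length_le hj, List.take_of_length_le (le_trans hj (Nat.le_succ j))]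
        have hdrop : ord.drop (j+1) = ord.drop j := by
          rw [List.drop_eq_nil_of_le hj, List.drop_eq_nil_of_le (le_trans hj (Nat.le_succ j))]
        rw [htake, hdrop]
        exact ih
end

section
/- Assume τ * |𝒜| ≤ K. For 0 ≤ j ≤ n let R_j denote the list built by the greedy fold after processing the first j entries of ord. Then the deficiency invariant ∑_{b : 𝒜} max(0, (τ : ℤ) − count b R_j) ≤ K − (R_j).length holds for every j; in particular (R_j).length ≤ K for every j. -/
open Finset

lemma privateRank_inv_s3 {n : ℕ} {𝒜 : Type*} [Fintype 𝒜] [DecidableEq 𝒜] (K τ : ℕ)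
    (a : Fin n → 𝒜) (H : Finset (Fin n)) :
    ∀ (L : List (Fin n)) (R : List (Fin n)),
      (∑ b : 𝒜, max 0 ((τ : ℤ) - countAttr a b R) ≤ (K : ℤ) - R.length) →
      ∑ b : 𝒜, max 0 ((τ : ℤ) - countAttr a b
          (L.foldl (fun R i => if i ∉ H ∧ CanAdd K τ a R i then R ++ [i] else R) R))
        ≤ (K : ℤ) -
          (L.foldl (fun R i => if i ∉ H ∧ CanAdd K τ a R i then R ++ [i] else R) R).length := by
  intro L
  induction L with
  | nil => intro R h; simpa using h
  | cons i L ih =>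
    intro R h
    simp only [List.foldl_cons]
    by_cases hc : i ∉ H ∧ CanAdd K τ a R i
    · rw [if_pos hc]
      apply ih
      have := hc.2
      unfold CanAdd at this
      simpa [List.length_append] using this
    · rw [if_neg hc]
      exact ih R h

/-- The deficiency invariant: after processing the first `j` entries of `ord`, the total
deficiency `∑_b max(0, τ - count b R_j)` is at most the number `K - |R_j|` of remaining slots;
in particular the list never exceeds length `K`. -/
theorem privateRank_deficiency
    (n K τ : ℕ) (𝒜 : Type*) [Fintype 𝒜] [DecidableEq 𝒜] [Nonempty 𝒜]
    (a : Fin n → 𝒜) (H : Finset (Fin n)) (ord : List (Fin n))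
    (hord : ∀ i : Fin n, ord.count i = 1)
    (hτK : τ * Fintype.card 𝒜 ≤ K) :
    ∀ j : ℕ, j ≤ n →
      (∑ b : 𝒜, max 0 ((τ : ℤ) - countAttr a b (privateRank K τ a H (ord.take j)))
          ≤ (K : ℤ) - (privateRank K τ a H (ord.take j)).length) ∧
      (privateRank K τ a H (ord.take j)).length ≤ K := by
  intro j _
  have hbase : ∑ b : 𝒜, max 0 ((τ : ℤ) - countAttr a b ([] : List (Fin n)))
      ≤ (K : ℤ) - ([] : List (Fin n)).length := by
    simp only [countAttr, List.countP_nil, List.length_nil]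
    have : ∑ _b : 𝒜, max 0 ((τ : ℤ) - 0) = (τ * Fintype.card 𝒜 : ℤ) := by
      simp [mul_comm]
    rw [Nat.cast_zero]
    calc ∑ _b : 𝒜, max 0 ((τ : ℤ) - 0) = (τ * Fintype.card 𝒜 : ℤ) := this
      _ ≤ (K : ℤ) := by exact_mod_cast hτK
      _ = (K : ℤ) - 0 := by ring
  have key := privateRank_inv_s3 K τ a H (ord.take j) [] hbase
  refine ⟨key, ?_⟩
  have hnn : (0 : ℤ) ≤ ∑ b : 𝒜, max 0 ((τ : ℤ) - countAttr a b (privateRank K τ a H (ord.take j))) :=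
    Finset.sum_nonneg fun b _ => le_max_left _ _
  have : ((privateRank K τ a H (ord.take j)).length : ℤ) ≤ K := by
    unfold privateRank at key hnn ⊢; linarith
  exact_mod_cast this
end

section
/- Let M : Matrix (Fin n) (Fin n) ℝ have nonnegative entries with every row summing to 1 (row-stochastic), and let 0 < c < 1. Then the matrix 1 − c • Mᵀ is invertible, and for every i : Fin n the vector S_i := (1−c) • ((1 − c • Mᵀ)⁻¹ *ᵥ e_i) is the unique vector S ∈ (Fin n → ℝ) satisfying the personalized PageRank equation S = c • (Mᵀ *ᵥ S) + (1−c) • e_i. -/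
open Matrix

/-- For a row-stochastic matrix `M` and damping factor `0 < c < 1`, the matrix `1 - c • Mᵀ`
is invertible, and `S_i = (1-c) • ((1 - c • Mᵀ)⁻¹ *ᵥ e_i)` is the unique solution of the
personalized PageRank equation `S = c • (Mᵀ *ᵥ S) + (1-c) • e_i`. -/
theorem ppr_unique_solution
    (n : ℕ) (M : Matrix (Fin n) (Fin n) ℝ)
    (hnn : ∀ i j, 0 ≤ M i j) (hrow : ∀ i, ∑ j, M i j = 1)
    (c : ℝ) (hc0 : 0 < c) (hc1 : c < 1) (i : Fin n) :
    IsUnit (1 - c • Mᵀ) ∧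
    ∀ S : Fin n → ℝ,
      S = c • (Mᵀ *ᵥ S) + (1 - c) • (Pi.single i 1 : Fin n → ℝ) ↔
        S = (1 - c) • ((1 - c • Mᵀ)⁻¹ *ᵥ (Pi.single i 1 : Fin n → ℝ)) := by
  set A : Matrix (Fin n) (Fin n) ℝ := 1 - c • Mᵀ with hA
  have hAv : ∀ v : Fin n → ℝ, A *ᵥ v = v - c • (Mᵀ *ᵥ v) := by
    intro v
    simp [hA, sub_mulVec, smul_mulVec]
  have hker : ∀ v : Fin n → ℝ, A *ᵥ v = 0 → v = 0 := by
    intro v hv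
    rw [hAv, sub_eq_zero] at hv
    have hv' : ∀ j, v j = c * ∑ k, M k j * v k := by
      intro j
      have := congrFun hv j
      simpa [mulVec, dotProduct, transpose_apply] using this
    have key : (∑ j, |v j|) ≤ c * ∑ j, |v j| := by
      calc (∑ j, |v j|) ≤ ∑ j, c * ∑ k, M k j * |v k| := by
            apply Finset.sum_le_sum
            intro j _
            rw [hv' j, abs_mul, abs_of_pos hc0]
            gcongr
            calc |∑ k, M k j * v k| ≤ ∑ k, |M k j * v k| := Finset.abs_sum_le_sum_abs _ _
              _ = ∑ k, M k j * |v k| := by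
                  apply Finset.sum_congr rfl
                  intro k _
                  rw [abs_mul, abs_of_nonneg (hnn k j)]
        _ = c * ∑ j, |v j| := by
            rw [← Finset.mul_sum, Finset.sum_comm]
            congr 1
            apply Finset.sum_congr rfl
            intro k _
            rw [← Finset.sum_mul, hrow k, one_mul]
    have hTnn : 0 ≤ ∑ j, |v j| := Finset.sum_nonneg fun j _ => abs_nonneg _
    have hT0 : (∑ j, |v j|) = 0 := by nlinarith
    funext j
    have := (Finset.sum_eq_zero_iff_of_nonneg (fun j _ => abs_nonneg (v j))).mp hT0 j
      (Finset.mem_univ j)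
    simpa using abs_eq_zero.mp this
  have hdet : A.det ≠ 0 := by
    intro h
    obtain ⟨v, hv0, hv⟩ := (Matrix.exists_mulVec_eq_zero_iff).mpr h
    exact hv0 (hker v hv)
  have hu : IsUnit A := (Matrix.isUnit_iff_isUnit_det A).mpr (isUnit_iff_ne_zero.mpr hdet)
  have hinv : A⁻¹ * A = 1 := Matrix.nonsing_inv_mul A (isUnit_iff_ne_zero.mpr hdet)
  have hinv' : A * A⁻¹ = 1 := Matrix.mul_nonsing_inv A (isUnit_iff_ne_zero.mpr hdet)
  refine ⟨hu, fun S => ?_⟩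
  set e : Fin n → ℝ := (Pi.single i 1 : Fin n → ℝ)
  have step1 : (S = c • (Mᵀ *ᵥ S) + (1 - c) • e) ↔ A *ᵥ S = (1 - c) • e := by
    rw [hAv, sub_eq_iff_eq_add, add_comm]
  rw [step1]
  constructor
  · intro h
    have := congrArg (fun w => A⁻¹ *ᵥ w) h
    simpa [Matrix.mulVec_mulVec, hinv, Matrix.mulVec_smul] using this
  · intro h
    have := congrArg (fun w => A *ᵥ w) h
    simpa [Matrix.mulVec_mulVec, hinv', Matrix.mulVec_smul] using this
end

section
/- Let M : Matrix (Fin n) (Fin n) ℝ have nonnegative entries with every row summing to 1 (row-stochastic), and let 0 < c < 1. For i : Fin n let S_i := (1−c) • ((1 − c • Mᵀ)⁻¹ *ᵥ e_i) and, for L : ℕ, let Ŝ_i^L := (1−c) • ((∑_{k=0}^{L} (c • Mᵀ)^k) *ᵥ e_i) be the cumulative power iteration truncation. Then Ŝ_i^L has nonnegative entries with ∑_{j} Ŝ_i^L j = 1 − c^{L+1}, the entries of S_i − Ŝ_i^L are nonnegative, and ∑_{j} |S_i j − Ŝ_i^L j| = c^{L+1}; in particular the cumulative power iteration converges to S_i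 as L → ∞. -/
open Matrix

/-- For a row-stochastic matrix `M` and damping factor `0 < c < 1`, the cumulative power
iteration truncation `Ŝ_i^L = (1-c) • ((∑_{k=0}^{L} (c • Mᵀ)^k) *ᵥ e_i)` of the personalized
PageRank vector `S_i = (1-c) • ((1 - c • Mᵀ)⁻¹ *ᵥ e_i)` has nonnegative entries summing to
`1 - c^{L+1}`, approximates `S_i` from below, and satisfies
`∑_j |S_i j - Ŝ_i^L j| = c^{L+1}`; in particular it converges to `S_i` as `L → ∞`. -/
theorem ppr_cumulative_power_iteration
    (n : ℕ) (hn : 0 < n) (M : Matrix (Fin n) (Fin n) ℝ)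
    (hnn : ∀ i j, 0 ≤ M i j) (hrow : ∀ i, ∑ j, M i j = 1)
    (c : ℝ) (hc0 : 0 < c) (hc1 : c < 1) (i : Fin n)
    (S : Fin n → ℝ) (hS : S = (1 - c) • ((1 - c • Mᵀ)⁻¹ *ᵥ (Pi.single i 1 : Fin n → ℝ)))
    (Strunc : ℕ → Fin n → ℝ)
    (hStrunc : ∀ L : ℕ, Strunc L =
      (1 - c) • ((∑ k ∈ Finset.range (L + 1), (c • Mᵀ) ^ k) *ᵥ (Pi.single i 1 : Fin n → ℝ))) :
    (∀ (L : ℕ) (j : Fin n), 0 ≤ Strunc L j) ∧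
    (∀ L : ℕ, ∑ j, Strunc L j = 1 - c ^ (L + 1)) ∧
    (∀ (L : ℕ) (j : Fin n), 0 ≤ S j - Strunc L j) ∧
    (∀ L : ℕ, ∑ j, |S j - Strunc L j| = c ^ (L + 1)) ∧
    Filter.Tendsto Strunc Filter.atTop (nhds S) := by
  set A : Matrix (Fin n) (Fin n) ℝ := c • Mᵀ with hA
  have hc1' : 0 < 1 - c := by linarith
  -- powers of M are nonneg, row-stochastic
  have hMk : ∀ k : ℕ, (∀ a b, 0 ≤ (M ^ k) a b) ∧ (∀ a, ∑ b, (M ^ k) a b = 1) := by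
    intro k
    induction k with
    | zero =>
      constructor
      · intro a b; simp [Matrix.one_apply]; positivity
      · intro a; simp [Matrix.one_apply]
    | succ k ih =>
      constructor
      · intro a b
        rw [pow_succ, Matrix.mul_apply]
        exact Finset.sum_nonneg fun l _ => mul_nonneg (ih.1 a l) (hnn l b)
      · intro a
        rw [pow_succ]
        simp only [Matrix.mul_apply]
        rw [Finset.sum_comm]
        calc ∑ l, ∑ b, (M ^ k) a l * M l b
            = ∑ l, (M ^ k) a l * ∑ b, M l b := by
              simp [Finset.mul_sum]
          _ = 1 := by simp [hrow, ih.2 a]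
  -- entries of A^k
  have hAk : ∀ (k : ℕ) (a b : Fin n), (A ^ k) a b = c ^ k * (M ^ k) b a := by
    intro k a b
    rw [hA, smul_pow, ← Matrix.transpose_pow]
    simp only [Matrix.smul_apply, Matrix.transpose_apply, smul_eq_mul]
  -- entrywise formula for Strunc
  have hT : ∀ (L : ℕ) (j : Fin n),
      Strunc L j = (1 - c) * ∑ k ∈ Finset.range (L + 1), c ^ k * (M ^ k) i j := by
    intro L j
    rw [hStrunc L]
    simp only [Pi.smul_apply, smul_eq_mul, Matrix.mulVec_single_one, Matrix.col_apply, mul_one,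
      Finset.sum_apply, Matrix.sum_apply]
    congr 1
    exact Finset.sum_congr rfl fun k _ => hAk k j i
  -- nonnegativity of Strunc
  have h1 : ∀ (L : ℕ) (j : Fin n), 0 ≤ Strunc L j := by
    intro L j
    rw [hT]
    refine mul_nonneg (le_of_lt hc1') (Finset.sum_nonneg fun k _ => ?_)
    exact mul_nonneg (by positivity) ((hMk k).1 i j)
  -- sums of Strunc
  have h2 : ∀ L : ℕ, ∑ j, Strunc L j = 1 - c ^ (L + 1) := by
    intro L
    have : ∑ j, Strunc L j
        = (1 - c) * ∑ k ∈ Finset.range (L + 1), c ^ k := by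
      simp only [hT, ← Finset.mul_sum]
      congr 1
      rw [Finset.sum_comm]
      refine Finset.sum_congr rfl fun k _ => ?_
      rw [← Finset.mul_sum, (hMk k).2 i, mul_one]
    have hne : c - 1 ≠ 0 := by linarith
    rw [this, geom_sum_eq (by linarith : c ≠ 1)]
    field_simp
    ring
  -- invertibility of 1 - A
  have hcolA : ∀ b, ∑ a, A a b = c := by
    intro b
    simp only [hA, Matrix.smul_apply, Matrix.transpose_apply, smul_eq_mul,
      ← Finset.mul_sum, hrow b, mul_one]
  have hAnn : ∀ a b, 0 ≤ A a b := by
    intro a b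
    simp only [hA, Matrix.smul_apply, Matrix.transpose_apply, smul_eq_mul]
    exact mul_nonneg hc0.le (hnn b a)
  have hdet : IsUnit (1 - A).det := by
    rw [isUnit_iff_ne_zero]
    intro hdet0
    obtain ⟨v, hv0, hv⟩ := Matrix.exists_mulVec_eq_zero_iff.2 hdet0
    have hvA : v = A *ᵥ v := by
      rw [Matrix.sub_mulVec, Matrix.one_mulVec, sub_eq_zero] at hv
      exact hv
    have hb : ∑ a, |v a| ≤ c * ∑ a, |v a| := by
      calc ∑ a, |v a| = ∑ a, |(A *ᵥ v) a| := by rw [← hvA]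
        _ ≤ ∑ a, ∑ b, A a b * |v b| := by
            refine Finset.sum_le_sum fun a _ => ?_
            rw [Matrix.mulVec, dotProduct]
            refine (Finset.abs_sum_le_sum_abs _ _).trans ?_
            refine Finset.sum_le_sum fun b _ => ?_
            rw [abs_mul, abs_of_nonneg (hAnn a b)]
        _ = ∑ b, (∑ a, A a b) * |v b| := by
            rw [Finset.sum_comm]; simp [Finset.sum_mul]
        _ = c * ∑ a, |v a| := by simp [hcolA, Finset.mul_sum]
    have hpos : 0 < ∑ a, |v a| := by
      obtain ⟨a, ha⟩ := Function.ne_iff.1 hv0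
      refine Finset.sum_pos' (fun b _ => abs_nonneg _) ⟨a, Finset.mem_univ a, ?_⟩
      simpa [abs_pos] using ha
    nlinarith
  -- geometric sum identity
  have hBP : ∀ L : ℕ, (1 - A) * (∑ k ∈ Finset.range (L + 1), A ^ k)
      = 1 - A ^ (L + 1) := by
    intro L
    have hcomm : A * (∑ k ∈ Finset.range (L + 1), A ^ k)
        = (∑ k ∈ Finset.range (L + 1), A ^ k) * A := by
      rw [Finset.mul_sum, Finset.sum_mul]
      refine Finset.sum_congr rfl fun k _ => ?_
      rw [← pow_succ', ← pow_succ]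
    have hg := geom_sum_mul A (L + 1)
    calc (1 - A) * (∑ k ∈ Finset.range (L + 1), A ^ k)
        = (∑ k ∈ Finset.range (L + 1), A ^ k)
          - (∑ k ∈ Finset.range (L + 1), A ^ k) * A := by
          rw [Matrix.sub_mul, Matrix.one_mul, hcomm]
      _ = -((∑ k ∈ Finset.range (L + 1), A ^ k) * (A - 1)) := by
          rw [Matrix.mul_sub, Matrix.mul_one, neg_sub]
      _ = 1 - A ^ (L + 1) := by rw [hg, neg_sub]
  have hP : ∀ L : ℕ, (∑ k ∈ Finset.range (L + 1), A ^ k)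
      = (1 - A)⁻¹ - (1 - A)⁻¹ * A ^ (L + 1) := by
    intro L
    have h := congrArg (fun X => (1 - A)⁻¹ * X) (hBP L)
    simp only [← Matrix.mul_assoc, Matrix.nonsing_inv_mul _ hdet, Matrix.one_mul,
      Matrix.mul_sub, Matrix.mul_one] at h
    exact h
  -- difference formula
  have hdiff : ∀ (L : ℕ) (j : Fin n),
      S j - Strunc L j = (1 - c) * ∑ m, (1 - A)⁻¹ j m * (A ^ (L + 1)) m i := by
    intro L j
    rw [hS, hStrunc L, hP L]
    simp only [Pi.smul_apply, smul_eq_mul, Matrix.sub_mulVec, Matrix.mulVec_single_one, Matrix.col_apply,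
      mul_one, Pi.sub_apply, Matrix.sub_apply]
    rw [Matrix.mul_apply (M := (1 - A)⁻¹) (N := A ^ (L + 1))]
    ring
  -- bound the difference
  have hbound : ∀ (L : ℕ) (j : Fin n),
      |S j - Strunc L j| ≤ ((1 - c) * (∑ m, |(1 - A)⁻¹ j m|) * c) * c ^ L := by
    intro L j
    rw [hdiff L j, abs_mul, abs_of_nonneg hc1'.le]
    have : |∑ m, (1 - A)⁻¹ j m * (A ^ (L + 1)) m i|
        ≤ ∑ m, |(1 - A)⁻¹ j m| * c ^ (L + 1) := by
      refine (Finset.abs_sum_le_sum_abs _ _).trans (Finset.sum_le_sum fun m _ => ?_)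
      rw [abs_mul]
      refine mul_le_mul_of_nonneg_left ?_ (abs_nonneg _)
      rw [hAk, abs_mul, abs_of_nonneg (by positivity), abs_of_nonneg ((hMk (L+1)).1 i m)]
      calc c ^ (L + 1) * (M ^ (L + 1)) i m ≤ c ^ (L + 1) * 1 := by
            refine mul_le_mul_of_nonneg_left ?_ (by positivity)
            calc (M ^ (L + 1)) i m ≤ ∑ b, (M ^ (L + 1)) i b :=
                  Finset.single_le_sum (fun b _ => (hMk (L+1)).1 i b) (Finset.mem_univ m)
              _ = 1 := (hMk (L+1)).2 i
        _ = c ^ (L + 1) := mul_one _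
    calc (1 - c) * |∑ m, (1 - A)⁻¹ j m * (A ^ (L + 1)) m i|
        ≤ (1 - c) * ∑ m, |(1 - A)⁻¹ j m| * c ^ (L + 1) :=
          mul_le_mul_of_nonneg_left this hc1'.le
      _ = ((1 - c) * (∑ m, |(1 - A)⁻¹ j m|) * c) * c ^ L := by
          rw [← Finset.sum_mul, pow_succ]; ring
  -- coordinatewise convergence
  have htendj : ∀ j, Filter.Tendsto (fun L => Strunc L j) Filter.atTop (nhds (S j)) := by
    intro j
    have htg : Filter.Tendsto
        (fun L : ℕ => ((1 - c) * (∑ m, |(1 - A)⁻¹ j m|) * c) * c ^ L)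
        Filter.atTop (nhds 0) := by
      have := (tendsto_pow_atTop_nhds_zero_of_lt_one hc0.le hc1).const_mul
        ((1 - c) * (∑ m, |(1 - A)⁻¹ j m|) * c)
      simpa using this
    have h0 : Filter.Tendsto (fun L => S j - Strunc L j) Filter.atTop (nhds 0) :=
      squeeze_zero_norm (fun L => hbound L j) htg
    have := (Filter.Tendsto.const_sub (S j) h0)
    simpa using this
  -- monotonicity in L
  have hmono : ∀ (j : Fin n), Monotone fun L => Strunc L j := by
    intro j L L' hLL'
    simp only [hT]
    refine mul_le_mul_of_nonneg_left ?_ hc1'.le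
    refine Finset.sum_le_sum_of_subset_of_nonneg ?_ fun k _ _ => ?_
    · exact Finset.range_subset_range.2 (by omega)
    · exact mul_nonneg (by positivity) ((hMk k).1 i j)
  have h3 : ∀ (L : ℕ) (j : Fin n), 0 ≤ S j - Strunc L j := by
    intro L j
    rw [sub_nonneg]
    refine ge_of_tendsto (htendj j) ?_
    filter_upwards [Filter.eventually_ge_atTop L] with L' hL'
    exact hmono j hL'
  -- sum of S is 1
  have hsumS : ∑ j, S j = 1 := by
    have ht1 : Filter.Tendsto (fun L => ∑ j, Strunc L j) Filter.atTop
        (nhds (∑ j, S j)) := tendsto_finset_sum _ fun j _ => htendj j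
    have ht2 : Filter.Tendsto (fun L => ∑ j, Strunc L j) Filter.atTop (nhds 1) := by
      simp only [h2]
      have : Filter.Tendsto (fun L : ℕ => c ^ (L + 1)) Filter.atTop (nhds 0) := by
        have := (tendsto_pow_atTop_nhds_zero_of_lt_one hc0.le hc1).const_mul c
        simpa [pow_succ, mul_comm] using this
      simpa using Filter.Tendsto.const_sub 1 this
    exact tendsto_nhds_unique ht1 ht2
  have h4 : ∀ L : ℕ, ∑ j, |S j - Strunc L j| = c ^ (L + 1) := by
    intro L
    calc ∑ j, |S j - Strunc L j| = ∑ j, (S j - Strunc L j) :=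
          Finset.sum_congr rfl fun j _ => abs_of_nonneg (h3 L j)
      _ = (∑ j, S j) - ∑ j, Strunc L j := Finset.sum_sub_distrib _ _
      _ = 1 - (1 - c ^ (L + 1)) := by rw [hsumS, h2]
      _ = c ^ (L + 1) := by ring
  exact ⟨h1, h2, h3, h4, tendsto_pi_nhds.2 htendj⟩
end
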